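/- In a K_{2,3}-induced-minor-free graph G, for any two vertices u, v, every minimal (u,v)-cutset C of G induces a subgraph whose largest stable (independent) set has size at most two. -/

import Mathlib

open SimpleGraph

namespace Paper

variable {V : Type}

/-- `u` and `v` are connected in `G` after deleting the vertex set `B`. -/
def ConnOutside (G : SimpleGraph V) (B : Set V) (u v : V) : Prop :=
  ∃ (hu : u ∈ Bᶜ) (hv : v ∈ Bᶜ), (G.induce Bᶜ).Reachable ⟨u, hu⟩ ⟨v, hv⟩

/-- `C` is an `(a,b)`-cutset of `G`. -/
def IsSep (G : SimpleGraph V) (a b : V) (C : Set V) : Prop :=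
  a ∉ C ∧ b ∉ C ∧ ¬ ConnOutside G C a b

/-- `C` is a minimal `(a,b)`-cutset of `G`. -/
def IsMinSep (G : SimpleGraph V) (a b : V) (C : Set V) : Prop :=
  IsSep G a b C ∧ ∀ C' ⊂ C, ¬ IsSep G a b C'

/-- `S` is a cluster of the layering partition of `G` rooted at `r`, at level `k`:
a maximal set of vertices at distance exactly `k` from `r`, any two of which are
connected in `G` minus the ball of radius `k-1` around `r`. -/
def IsCluster (G : SimpleGraph V) (r : V) (k : ℕ) (S : Set V) : Prop :=
  S.Nonempty ∧ (∀ v ∈ S, G.dist r v = k) ∧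
  (∀ u ∈ S, ∀ v ∈ S, ConnOutside G {w | G.dist r w < k} u v) ∧
  ∀ S', S ⊆ S' → (∀ v ∈ S', G.dist r v = k) →
    (∀ u ∈ S', ∀ v ∈ S', ConnOutside G {w | G.dist r w < k} u v) → S' ⊆ S

/-- The parent set of a cluster `S` at level `k`: vertices at distance `k-1` from `r`
adjacent to some vertex of `S`. -/
def parentSet (G : SimpleGraph V) (r : V) (k : ℕ) (S : Set V) : Set V :=
  {v | G.dist r v = k - 1 ∧ ∃ u ∈ S, G.Adj v u}

/-- `G` has no `K_{2,3}` induced minor. -/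
def K23Free (G : SimpleGraph V) : Prop :=
  ¬ ∃ φ : Fin 2 ⊕ Fin 3 → Set V,
      (∀ w, (φ w).Nonempty) ∧ (∀ w, (G.induce (φ w)).Connected) ∧
      (Pairwise fun a b => Disjoint (φ a) (φ b)) ∧
      (∀ a b, a ≠ b →
        ((completeBipartiteGraph (Fin 2) (Fin 3)).Adj a b ↔
          ∃ u ∈ φ a, ∃ v ∈ φ b, G.Adj u v))

/-- `G` contains a theta as an induced subgraph. -/
def HasTheta (G : SimpleGraph V) : Prop :=
  ∃ (a b : V) (p₁ p₂ p₃ : G.Walk a b),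
    p₁.IsPath ∧ p₂.IsPath ∧ p₃.IsPath ∧
    2 ≤ p₁.length ∧ 2 ≤ p₂.length ∧ 2 ≤ p₃.length ∧
    (∀ v, v ∈ p₁.support → v ∈ p₂.support → v = a ∨ v = b) ∧
    (∀ v, v ∈ p₁.support → v ∈ p₃.support → v = a ∨ v = b) ∧
    (∀ v, v ∈ p₂.support → v ∈ p₃.support → v = a ∨ v = b) ∧
    ∀ u v, u ∈ p₁.support ++ p₂.support ++ p₃.support →
      v ∈ p₁.support ++ p₂.support ++ p₃.support →
      (G.Adj u v ↔ s(u, v) ∈ p₁.edges ++ p₂.edges ++ p₃.edges)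

/-- `G` contains a pyramid as an induced subgraph. -/
def HasPyramid (G : SimpleGraph V) : Prop :=
  ∃ (a b₁ b₂ b₃ : V) (p₁ : G.Walk a b₁) (p₂ : G.Walk a b₂) (p₃ : G.Walk a b₃),
    p₁.IsPath ∧ p₂.IsPath ∧ p₃.IsPath ∧
    G.Adj b₁ b₂ ∧ G.Adj b₂ b₃ ∧ G.Adj b₁ b₃ ∧
    1 ≤ p₁.length ∧ 1 ≤ p₂.length ∧ 1 ≤ p₃.length ∧
    ((2 ≤ p₁.length ∧ 2 ≤ p₂.length) ∨ (2 ≤ p₁.length ∧ 2 ≤ p₃.length) ∨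
      (2 ≤ p₂.length ∧ 2 ≤ p₃.length)) ∧
    (∀ v, v ∈ p₁.support → v ∈ p₂.support → v = a) ∧
    (∀ v, v ∈ p₁.support → v ∈ p₃.support → v = a) ∧
    (∀ v, v ∈ p₂.support → v ∈ p₃.support → v = a) ∧
    ∀ u v, u ∈ p₁.support ++ p₂.support ++ p₃.support →
      v ∈ p₁.support ++ p₂.support ++ p₃.support →
      (G.Adj u v ↔ s(u, v) ∈ p₁.edges ++ p₂.edges ++ p₃.edges ∨
        s(u, v) ∈ [s(b₁, b₂), s(b₂, b₃), s(b₁, b₃)])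

/-- The common part of the definition of an (induced) prism in `G`. -/
def PrismWitness (G : SimpleGraph V) (a₁ a₂ a₃ b₁ b₂ b₃ : V)
    (p₁ : G.Walk a₁ b₁) (p₂ : G.Walk a₂ b₂) (p₃ : G.Walk a₃ b₃) : Prop :=
  p₁.IsPath ∧ p₂.IsPath ∧ p₃.IsPath ∧
  G.Adj a₁ a₂ ∧ G.Adj a₂ a₃ ∧ G.Adj a₁ a₃ ∧
  G.Adj b₁ b₂ ∧ G.Adj b₂ b₃ ∧ G.Adj b₁ b₃ ∧
  (∀ v, v ∈ p₁.support → v ∉ p₂.support) ∧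
  (∀ v, v ∈ p₁.support → v ∉ p₃.support) ∧
  (∀ v, v ∈ p₂.support → v ∉ p₃.support) ∧
  ∀ u v, u ∈ p₁.support ++ p₂.support ++ p₃.support →
    v ∈ p₁.support ++ p₂.support ++ p₃.support →
    (G.Adj u v ↔ s(u, v) ∈ p₁.edges ++ p₂.edges ++ p₃.edges ∨
      s(u, v) ∈ [s(a₁, a₂), s(a₂, a₃), s(a₁, a₃), s(b₁, b₂), s(b₂, b₃), s(b₁, b₃)])

/-- `G` contains a prism as an induced subgraph. -/
def HasPrism (G : SimpleGraph V) : Prop :=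
  ∃ (a₁ a₂ a₃ b₁ b₂ b₃ : V) (p₁ : G.Walk a₁ b₁) (p₂ : G.Walk a₂ b₂) (p₃ : G.Walk a₃ b₃),
    PrismWitness G a₁ a₂ a₃ b₁ b₂ b₃ p₁ p₂ p₃

/-- `G` contains a long prism (at least one path of length ≥ 2) as an induced subgraph. -/
def HasLongPrism (G : SimpleGraph V) : Prop :=
  ∃ (a₁ a₂ a₃ b₁ b₂ b₃ : V) (p₁ : G.Walk a₁ b₁) (p₂ : G.Walk a₂ b₂) (p₃ : G.Walk a₃ b₃),
    PrismWitness G a₁ a₂ a₃ b₁ b₂ b₃ p₁ p₂ p₃ ∧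
    (2 ≤ p₁.length ∨ 2 ≤ p₂.length ∨ 2 ≤ p₃.length)

/-- `c` is an induced cycle (hole when length ≥ 4) of `G`. -/
def IsInducedCycle (G : SimpleGraph V) {v : V} (c : G.Walk v v) : Prop :=
  c.IsCycle ∧ ∀ x ∈ c.support, ∀ y ∈ c.support, (G.Adj x y ↔ s(x, y) ∈ c.edges)

/-- `p` is an induced path of `G`. -/
def IsInducedPath (G : SimpleGraph V) {a b : V} (p : G.Walk a b) : Prop :=
  p.IsPath ∧ ∀ u ∈ p.support, ∀ v ∈ p.support, (G.Adj u v ↔ s(u, v) ∈ p.edges)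

/-- `G` contains a wheel: a hole together with a vertex having ≥ 3 neighbours on it. -/
def HasWheel (G : SimpleGraph V) : Prop :=
  ∃ (v x : V) (c : G.Walk v v), IsInducedCycle G c ∧ 4 ≤ c.length ∧ x ∉ c.support ∧
    ∃ y₁ y₂ y₃, y₁ ≠ y₂ ∧ y₁ ≠ y₃ ∧ y₂ ≠ y₃ ∧
      y₁ ∈ c.support ∧ y₂ ∈ c.support ∧ y₃ ∈ c.support ∧
      G.Adj x y₁ ∧ G.Adj x y₂ ∧ G.Adj x y₃

/-- A sector of a wheel with rim `c` and centre `x`: a path contained in the rim whose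
end-vertices are neighbours of `x` and whose internal vertices are not. -/
def IsSector (G : SimpleGraph V) {v : V} (c : G.Walk v v) (x : V) {s t : V}
    (q : G.Walk s t) : Prop :=
  q.IsPath ∧ (∀ e ∈ q.edges, e ∈ c.edges) ∧ G.Adj x s ∧ G.Adj x t ∧
  ∀ w ∈ q.support, w ≠ s → w ≠ t → ¬ G.Adj x w

/-- `G` contains a broken wheel: a wheel with at least two sectors of length ≥ 2. -/
def HasBrokenWheel (G : SimpleGraph V) : Prop :=
  ∃ (v x : V) (c : G.Walk v v), IsInducedCycle G c ∧ 4 ≤ c.length ∧ x ∉ c.support ∧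
    (∃ y₁ y₂ y₃, y₁ ≠ y₂ ∧ y₁ ≠ y₃ ∧ y₂ ≠ y₃ ∧
      y₁ ∈ c.support ∧ y₂ ∈ c.support ∧ y₃ ∈ c.support ∧
      G.Adj x y₁ ∧ G.Adj x y₂ ∧ G.Adj x y₃) ∧
    ∃ (s₁ t₁ s₂ t₂ : V) (q₁ : G.Walk s₁ t₁) (q₂ : G.Walk s₂ t₂),
      IsSector G c x q₁ ∧ IsSector G c x q₂ ∧ 2 ≤ q₁.length ∧ 2 ≤ q₂.length ∧
      ∀ w, w ∈ q₁.support → w ∈ q₂.support → G.Adj x w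

/-- A universally signable graph: no theta, pyramid, prism, or wheel induced subgraph. -/
def UniversallySignable (G : SimpleGraph V) : Prop :=
  ¬ HasTheta G ∧ ¬ HasPyramid G ∧ ¬ HasPrism G ∧ ¬ HasWheel G

/-- `G` has tree-width at most `w`. -/
def TreewidthLe (G : SimpleGraph V) (w : ℕ) : Prop :=
  ∃ (ι : Type) (T : SimpleGraph ι) (bag : ι → Set V),
    T.IsTree ∧
    (∀ v, ∃ i, v ∈ bag i) ∧
    (∀ u v, G.Adj u v → ∃ i, u ∈ bag i ∧ v ∈ bag i) ∧
    (∀ v, (T.induce {i | v ∈ bag i}).Connected) ∧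
    (∀ i, (bag i).ncard ≤ w + 1)

/-- The strong isometric path complexity of `G` is at most `s`: for every vertex `v`,
every isometric path of `G` can be vertex-covered by at most `s` isometric paths
rooted at `v`. -/
def SipcoLe (G : SimpleGraph V) (s : ℕ) : Prop :=
  ∀ v : V, ∀ ⦃x y : V⦄ (p : G.Walk x y), p.length = G.dist x y →
    ∃ n : ℕ, n ≤ s ∧ ∃ (e : Fin n → V) (Q : ∀ i, G.Walk v (e i)),
      (∀ i, (Q i).length = G.dist v (e i)) ∧
      ∀ z ∈ p.support, ∃ i, z ∈ (Q i).support

/-- The strong isometric path complexity of `G`. -/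
noncomputable def sipco (G : SimpleGraph V) : ℕ := sInf {s | SipcoLe G s}

/-- `P` induces exactly two connected components `C₁`, `C₂` in `G`. -/
def SplitsTwo (G : SimpleGraph V) (P C₁ C₂ : Set V) : Prop :=
  C₁ ∪ C₂ = P ∧ Disjoint C₁ C₂ ∧ C₁.Nonempty ∧ C₂.Nonempty ∧
  (G.induce C₁).Connected ∧ (G.induce C₂).Connected ∧
  ∀ u ∈ C₁, ∀ v ∈ C₂, ¬ G.Adj u v

/-- The star of edges joining each vertex of `D` to `w`. -/
def starEdges (w : V) (D : Set V) : Set (Sym2 V) := {e | ∃ v ∈ D, e = s(v, w)}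

/-- Vertices of `S` with a `G`-neighbour in `C`. -/
def Dset (G : SimpleGraph V) (S C : Set V) : Set V := {u ∈ S | ∃ v ∈ C, G.Adj u v}

/-- Admissible edge sets `E` produced by Algorithm 1 when processing a cluster `S`
with parent set `P`. -/
def ClusterEdges (G : SimpleGraph V) (S P : Set V) (E : Set (Sym2 V)) : Prop :=
  ((G.induce P).Connected ∧ ∃ w ∈ P, E = starEdges w S) ∨
  ∃ C₁ C₂, SplitsTwo G P C₁ C₂ ∧ ∃ w₁ ∈ C₁, ∃ w₂ ∈ C₂,
    ((Dset G S C₁ ∩ Dset G S C₂ = ∅ ∧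
       ((¬ (∃ u ∈ Dset G S C₁, ∃ v ∈ Dset G S C₂, G.Adj u v) ∧
          E = starEdges w₁ (Dset G S C₁) ∪ starEdges w₂ (Dset G S C₂)) ∨
        (∃ u ∈ Dset G S C₁, ∃ v ∈ Dset G S C₂, G.Adj u v ∧
          E = starEdges w₁ (Dset G S C₁) ∪ starEdges w₂ (Dset G S C₂) ∪ {s(u, v)})))
     ∨
     ((Dset G S C₁ ∩ Dset G S C₂).Nonempty ∧
       ∃ u ∈ Dset G S C₁ ∩ Dset G S C₂,
         E = starEdges w₁ (Dset G S C₁) ∪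
             starEdges w₂ (Dset G S C₂ \ Dset G S C₁) ∪ {s(u, w₂)}))

/-- `H` is a possible output of the cluster-rewiring algorithm (Algorithm 1) on `(G, r)`. -/
def IsAlgoOutput (G : SimpleGraph V) (r : V) (H : SimpleGraph V) : Prop :=
  ∃ f : Set V → Set (Sym2 V),
    (∀ S k, 1 ≤ k → IsCluster G r k S → ClusterEdges G S (parentSet G r k S) (f S)) ∧
    H.edgeSet = ⋃ S ∈ {S : Set V | ∃ k, 1 ≤ k ∧ IsCluster G r k S}, f S

/-- The type of clusters of the layering partition of `G` rooted at `r`. -/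
def ClusterType (G : SimpleGraph V) (r : V) : Type := {S : Set V // ∃ k, IsCluster G r k S}

/-- The layering tree: clusters, adjacent when `G` has an edge between them. -/
def layeringTree (G : SimpleGraph V) (r : V) : SimpleGraph (ClusterType G r) :=
  SimpleGraph.fromRel (fun S T => ∃ u ∈ S.1, ∃ v ∈ T.1, G.Adj u v)

/-- `A` is a connected component of `G - C`. -/
def IsCompOf (G : SimpleGraph V) (C A : Set V) : Prop :=
  A.Nonempty ∧ Disjoint A C ∧ (G.induce A).Connected ∧
  ∀ u ∈ A, ∀ v, v ∉ A → v ∉ C → ¬ G.Adj u v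


lemma reachable_induce_of_walk {G : SimpleGraph V} {s : Set V} :
    ∀ {a b : V} (p : G.Walk a b) (hp : ∀ x ∈ p.support, x ∈ s),
    (G.induce s).Reachable ⟨a, hp a p.start_mem_support⟩ ⟨b, hp b p.end_mem_support⟩ := by
  intro a b p
  induction p with
  | nil => intro hp; rfl
  | @cons a c b h q ih =>
    intro hp
    have hc : ∀ x ∈ q.support, x ∈ s := fun x hx => hp x (by simp [hx])
    have h1 : (G.induce s).Adj ⟨a, hp a (Walk.start_mem_support _)⟩ ⟨c, hc c q.start_mem_support⟩ := by
      simp [h]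
    exact h1.reachable.trans (ih hc)

lemma connOutside_of_walk {G : SimpleGraph V} {B : Set V} {u v : V}
    (p : G.Walk u v) (hp : ∀ x ∈ p.support, x ∉ B) : ConnOutside G B u v := by
  refine ⟨hp u p.start_mem_support, hp v p.end_mem_support, ?_⟩
  exact reachable_induce_of_walk p hp

lemma walk_of_connOutside {G : SimpleGraph V} {B : Set V} {u v : V}
    (h : ConnOutside G B u v) : ∃ p : G.Walk u v, ∀ x ∈ p.support, x ∉ B := by
  obtain ⟨hu, hv, ⟨q⟩⟩ := h
  refine ⟨q.map (SimpleGraph.Embedding.induce Bᶜ).toHom, ?_⟩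
  intro x hx
  replace hx : x ∈ (q.map (SimpleGraph.Embedding.induce Bᶜ).toHom).support := hx
  rw [Walk.support_map, List.mem_map] at hx
  obtain ⟨⟨y, hy⟩, _, rfl⟩ := hx
  exact hy

lemma exists_nbr {G : SimpleGraph V} {C : Set V} {u v x : V}
    (hu : u ∉ C) (hxC : x ∈ C)
    (p : G.Walk u v) (hp : ∀ z ∈ p.support, z ∉ C \ {x})
    (hsep : ∀ q : G.Walk u v, ∃ z ∈ q.support, z ∈ C) :
    ∃ y, G.Adj x y ∧ ∃ q : G.Walk u y, ∀ z ∈ q.support, z ∉ C := by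
  classical
  set p' : G.Walk u v := (p.toPath : G.Path u v).val with hp'
  have hsub : p'.support ⊆ p.support := p.support_toPath_subset
  have hpath : p'.IsPath := p.toPath.2
  have hx : x ∈ p'.support := by
    by_contra hx
    obtain ⟨z, hz, hzC⟩ := hsep p'
    have := hp z (hsub hz)
    simp only [Set.mem_diff, Set.mem_singleton_iff, not_and, not_not] at this
    exact hx ((this hzC) ▸ hz)
  set q0 : G.Walk u x := p'.takeUntil x hx with hq0
  have hq0path : q0.IsPath := hpath.takeUntil hx
  have hq0sub : q0.support ⊆ p'.support := p'.support_takeUntil_subset hx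
  have hxu : x ≠ u := fun h => hu (h ▸ hxC)
  obtain ⟨y, hxy, r, hr⟩ := Walk.exists_eq_cons_of_ne hxu q0.reverse
  have hrevpath : q0.reverse.IsPath := hq0path.reverse
  have hxnr : x ∉ r.support := by
    have := hrevpath.support_nodup
    rw [hr] at this
    simpa using (List.nodup_cons.mp (by simpa using this)).1
  refine ⟨y, hxy, r.reverse, ?_⟩
  intro z hz
  rw [Walk.support_reverse, List.mem_reverse] at hz
  have hzq0 : z ∈ q0.support := by
    have : z ∈ q0.reverse.support := by rw [hr]; simp [hz]
    rwa [Walk.support_reverse, List.mem_reverse] at this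
  have hzx : z ≠ x := fun h => hxnr (h ▸ hz)
  have := hp z (hsub (hq0sub hzq0))
  simp only [Set.mem_diff, Set.mem_singleton_iff, not_and, not_not] at this
  exact fun hzC => hzx (this hzC)

theorem stmt2 {V : Type} [Fintype V] (G : SimpleGraph V) (hG : K23Free G)
    (u v : V) (C : Set V) (hC : IsMinSep G u v C)
    (A : Set V) (hA : A ⊆ C) (hstable : ∀ x ∈ A, ∀ y ∈ A, ¬ G.Adj x y) :
    A.ncard ≤ 2 := by
  classical
  by_contra hcard
  push_neg at hcard
  obtain ⟨B, hBA, hB3⟩ := Set.exists_subset_card_eq (show 3 ≤ A.ncard from hcard)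
  rw [Set.ncard_eq_three] at hB3
  obtain ⟨a, b, c, hab, hac, hbc, rfl⟩ := hB3
  obtain ⟨⟨huC, hvC, hsepC⟩, hmin⟩ := hC
  have haA : a ∈ A := hBA (by simp)
  have hbA : b ∈ A := hBA (by simp)
  have hcA : c ∈ A := hBA (by simp)
  have haC : a ∈ C := hA haA
  have hbC : b ∈ C := hA hbA
  have hcC : c ∈ C := hA hcA
  have hnoWalk : ∀ q : G.Walk u v, ∃ z ∈ q.support, z ∈ C := by
    intro q
    by_contra h
    push_neg at h
    exact hsepC (connOutside_of_walk q h)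
  set Ku : Set V := {w | ∃ q : G.Walk u w, ∀ z ∈ q.support, z ∉ C} with hKudef
  set Kv : Set V := {w | ∃ q : G.Walk v w, ∀ z ∈ q.support, z ∉ C} with hKvdef
  have huKu : u ∈ Ku := ⟨Walk.nil, by simpa using huC⟩
  have hvKv : v ∈ Kv := ⟨Walk.nil, by simpa using hvC⟩
  have hKuC : ∀ w ∈ Ku, w ∉ C := by
    rintro w ⟨q, hq⟩; exact hq w q.end_mem_support
  have hKvC : ∀ w ∈ Kv, w ∉ C := by
    rintro w ⟨q, hq⟩; exact hq w q.end_mem_support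
  have hKuKv : ∀ p ∈ Ku, ∀ q ∈ Kv, ¬ G.Adj p q := by
    rintro p ⟨qp, hqp⟩ q ⟨qq, hqq⟩ hadj
    obtain ⟨z, hz, hzC⟩ := hnoWalk (qp.append (Walk.cons hadj qq.reverse))
    rw [Walk.mem_support_append_iff] at hz
    rcases hz with hz | hz
    · exact hqp z hz hzC
    · simp only [Walk.support_cons, List.mem_cons] at hz
      rcases hz with rfl | hz
      · exact hqp z qp.end_mem_support hzC
      · rw [Walk.support_reverse, List.mem_reverse] at hz
        exact hqq z hz hzC
  have hdisjKuKv : Disjoint Ku Kv := by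
    rw [Set.disjoint_left]
    rintro w ⟨qp, hqp⟩ ⟨qq, hqq⟩
    obtain ⟨z, hz, hzC⟩ := hnoWalk (qp.append qq.reverse)
    rw [Walk.mem_support_append_iff] at hz
    rcases hz with hz | hz
    · exact hqp z hz hzC
    · rw [Walk.support_reverse, List.mem_reverse] at hz
      exact hqq z hz hzC
  have hKclosed : ∀ (w₀ w : V) (q : G.Walk w₀ w), (∀ z ∈ q.support, z ∉ C) →
      ∀ z ∈ q.support, ∃ q' : G.Walk w₀ z, ∀ y ∈ q'.support, y ∉ C := by
    intro w₀ w q hq z hz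
    exact ⟨q.takeUntil z hz, fun y hy => hq y (q.support_takeUntil_subset hz hy)⟩
  have hconn : ∀ w₀ : V, w₀ ∉ C →
      (G.induce {w | ∃ q : G.Walk w₀ w, ∀ z ∈ q.support, z ∉ C}).Connected := by
    intro w₀ hw₀
    rw [connected_iff]
    constructor
    · rintro ⟨w₁, q₁, hq₁⟩ ⟨w₂, q₂, hq₂⟩
      have hwalk : ∀ z ∈ (q₁.reverse.append q₂).support,
          z ∈ {w | ∃ q : G.Walk w₀ w, ∀ z ∈ q.support, z ∉ C} := by
        intro z hz
        rw [Walk.mem_support_append_iff] at hz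
        rcases hz with hz | hz
        · rw [Walk.support_reverse, List.mem_reverse] at hz
          exact hKclosed _ _ q₁ hq₁ z hz
        · exact hKclosed _ _ q₂ hq₂ z hz
      exact reachable_induce_of_walk (q₁.reverse.append q₂) hwalk
    · exact ⟨⟨w₀, Walk.nil, by simpa using hw₀⟩⟩
  have hnbr : ∀ x ∈ C, (∃ y ∈ Ku, G.Adj y x) ∧ ∃ y ∈ Kv, G.Adj y x := by
    intro x hxC
    have hss : C \ {x} ⊂ C := Set.sdiff_singleton_ssubset.mpr hxC
    have hnsep := hmin _ hss
    have hux : u ∉ C \ {x} := fun h => huC h.1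
    have hvx : v ∉ C \ {x} := fun h => hvC h.1
    have hconn' : ConnOutside G (C \ {x}) u v := by
      by_contra h
      exact hnsep ⟨hux, hvx, h⟩
    obtain ⟨p, hp⟩ := walk_of_connOutside hconn'
    constructor
    · obtain ⟨y, hxy, q, hq⟩ := exists_nbr huC hxC p hp hnoWalk
      exact ⟨y, ⟨q, hq⟩, hxy.symm⟩
    · have hnoWalk' : ∀ q : G.Walk v u, ∃ z ∈ q.support, z ∈ C := by
        intro q
        obtain ⟨z, hz, hzC⟩ := hnoWalk q.reverse
        rw [Walk.support_reverse, List.mem_reverse] at hz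
        exact ⟨z, hz, hzC⟩
      have hp' : ∀ z ∈ p.reverse.support, z ∉ C \ {x} := by
        intro z hz
        rw [Walk.support_reverse, List.mem_reverse] at hz
        exact hp z hz
      obtain ⟨y, hxy, q, hq⟩ := exists_nbr hvC hxC p.reverse hp' hnoWalk'
      exact ⟨y, ⟨q, hq⟩, hxy.symm⟩
  -- the K_{2,3} model
  obtain ⟨⟨ya, hyaKu, hyaa⟩, ⟨za, hzaKv, hzaa⟩⟩ := hnbr a haC
  obtain ⟨⟨yb, hybKu, hybb⟩, ⟨zb, hzbKv, hzbb⟩⟩ := hnbr b hbC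
  obtain ⟨⟨yc, hycKu, hycc⟩, ⟨zc, hzcKv, hzcc⟩⟩ := hnbr c hcC
  have hsing : ∀ x : V, (G.induce ({x} : Set V)).Connected := by
    intro x
    rw [connected_iff]
    refine ⟨?_, ⟨⟨x, rfl⟩⟩⟩
    rintro ⟨y, hy⟩ ⟨z, hz⟩
    have hy' : y = x := hy
    have hz' : z = x := hz
    subst hy'; subst hz'
    exact Reachable.refl _
  apply hG
  refine ⟨Sum.elim ![Ku, Kv] ![{a}, {b}, {c}], ?_, ?_, ?_, ?_⟩
  · rintro (i | j)
    · fin_cases i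
      · exact ⟨u, huKu⟩
      · exact ⟨v, hvKv⟩
    · fin_cases j
      · exact ⟨a, rfl⟩
      · exact ⟨b, rfl⟩
      · exact ⟨c, rfl⟩
  · rintro (i | j)
    · fin_cases i
      · exact hconn u huC
      · exact hconn v hvC
    · fin_cases j
      · exact hsing a
      · exact hsing b
      · exact hsing c
  · intro w1 w2 hne
    have hdKu : ∀ x, x ∈ C → Disjoint Ku ({x} : Set V) :=
      fun x hx => Set.disjoint_singleton_right.mpr (fun h => hKuC x h hx)
    have hdKv : ∀ x, x ∈ C → Disjoint Kv ({x} : Set V) :=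
      fun x hx => Set.disjoint_singleton_right.mpr (fun h => hKvC x h hx)
    have hdab : Disjoint ({a} : Set V) {b} := Set.disjoint_singleton.mpr hab
    have hdac : Disjoint ({a} : Set V) {c} := Set.disjoint_singleton.mpr hac
    have hdbc : Disjoint ({b} : Set V) {c} := Set.disjoint_singleton.mpr hbc
    rcases w1 with i1 | j1 <;> rcases w2 with i2 | j2
    · fin_cases i1 <;> fin_cases i2
      · exact absurd rfl hne
      · exact hdisjKuKv
      · exact hdisjKuKv.symm
      · exact absurd rfl hne
    · fin_cases i1 <;> fin_cases j2
      · exact hdKu a haC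
      · exact hdKu b hbC
      · exact hdKu c hcC
      · exact hdKv a haC
      · exact hdKv b hbC
      · exact hdKv c hcC
    · fin_cases j1 <;> fin_cases i2
      · exact (hdKu a haC).symm
      · exact (hdKv a haC).symm
      · exact (hdKu b hbC).symm
      · exact (hdKv b hbC).symm
      · exact (hdKu c hcC).symm
      · exact (hdKv c hcC).symm
    · fin_cases j1 <;> fin_cases j2
      · exact absurd rfl hne
      · exact hdab
      · exact hdac
      · exact hdab.symm
      · exact absurd rfl hne
      · exact hdbc
      · exact hdac.symm
      · exact hdbc.symm
      · exact absurd rfl hne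
  · intro w1 w2 hne
    rcases w1 with i1 | j1 <;> rcases w2 with i2 | j2
    · fin_cases i1 <;> fin_cases i2
      · exact absurd rfl hne
      · refine ⟨fun h => absurd h (by simp), ?_⟩
        rintro ⟨p, hp, q, hq, hadj⟩
        exact absurd hadj (hKuKv p hp q hq)
      · refine ⟨fun h => absurd h (by simp), ?_⟩
        rintro ⟨p, hp, q, hq, hadj⟩
        exact absurd hadj.symm (hKuKv q hq p hp)
      · exact absurd rfl hne
    · fin_cases i1 <;> fin_cases j2
      · exact ⟨fun _ => ⟨ya, hyaKu, a, rfl, hyaa⟩, fun _ => by simp⟩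
      · exact ⟨fun _ => ⟨yb, hybKu, b, rfl, hybb⟩, fun _ => by simp⟩
      · exact ⟨fun _ => ⟨yc, hycKu, c, rfl, hycc⟩, fun _ => by simp⟩
      · exact ⟨fun _ => ⟨za, hzaKv, a, rfl, hzaa⟩, fun _ => by simp⟩
      · exact ⟨fun _ => ⟨zb, hzbKv, b, rfl, hzbb⟩, fun _ => by simp⟩
      · exact ⟨fun _ => ⟨zc, hzcKv, c, rfl, hzcc⟩, fun _ => by simp⟩
    · fin_cases j1 <;> fin_cases i2
      · exact ⟨fun _ => ⟨a, rfl, ya, hyaKu, hyaa.symm⟩, fun _ => by simp⟩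
      · exact ⟨fun _ => ⟨a, rfl, za, hzaKv, hzaa.symm⟩, fun _ => by simp⟩
      · exact ⟨fun _ => ⟨b, rfl, yb, hybKu, hybb.symm⟩, fun _ => by simp⟩
      · exact ⟨fun _ => ⟨b, rfl, zb, hzbKv, hzbb.symm⟩, fun _ => by simp⟩
      · exact ⟨fun _ => ⟨c, rfl, yc, hycKu, hycc.symm⟩, fun _ => by simp⟩
      · exact ⟨fun _ => ⟨c, rfl, zc, hzcKv, hzcc.symm⟩, fun _ => by simp⟩
    · have hstab : ∀ x ∈ A, ∀ y ∈ A,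
          ¬ ∃ p, p ∈ ({x} : Set V) ∧ ∃ q, q ∈ ({y} : Set V) ∧ G.Adj p q := by
        rintro x hx y hy ⟨p, hp, q, hq, hadj⟩
        have hp' : p = x := hp
        have hq' : q = y := hq
        subst hp'; subst hq'
        exact hstable p hx q hy hadj
      fin_cases j1 <;> fin_cases j2
      · exact absurd rfl hne
      · exact ⟨fun h => absurd h (by simp), fun h => absurd h (hstab a haA b hbA)⟩
      · exact ⟨fun h => absurd h (by simp), fun h => absurd h (hstab a haA c hcA)⟩
      · exact ⟨fun h => absurd h (by simp), fun h => absurd h (hstab b hbA a haA)⟩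
      · exact absurd rfl hne
      · exact ⟨fun h => absurd h (by simp), fun h => absurd h (hstab b hbA c hcA)⟩
      · exact ⟨fun h => absurd h (by simp), fun h => absurd h (hstab c hcA a haA)⟩
      · exact ⟨fun h => absurd h (by simp), fun h => absurd h (hstab c hcA b hbA)⟩
      · exact absurd rfl hne

end Paper
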